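/- Let A = [[a,b],[c,d]] be a nonnegative column-allowable 2×2 real matrix. If A has no null row (i.e. a+b > 0 and c+d > 0), then τ(A) = |√(ad) − √(bc)| / (√(ad) + √(bc)); if A has a null row, then τ(A) = 0 (i.e. d_columns(A'A) = 0 for every admissible A'). -/

import Mathlib

open Matrix

/-- A 2×2 real matrix is nonnegative and column-allowable. -/
def ColAllowable (A : Matrix (Fin 2) (Fin 2) ℝ) : Prop :=
  (∀ i j, 0 ≤ A i j) ∧ 0 < A 0 0 + A 1 0 ∧ 0 < A 0 1 + A 1 1

/-- The distance between the (normalized) columns of `A`. -/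
noncomputable def dcols (A : Matrix (Fin 2) (Fin 2) ℝ) : ℝ :=
  |A.det| / ((A 0 0 + A 1 0) * (A 0 1 + A 1 1))

/-- The contraction coefficient `τ(A)`. -/
noncomputable def tau (A : Matrix (Fin 2) (Fin 2) ℝ) : ℝ :=
  sSup ((fun B => dcols (B * A) / dcols B) '' {B | ColAllowable B ∧ dcols B ≠ 0})

lemma colAllowable_one : ColAllowable (1 : Matrix (Fin 2) (Fin 2) ℝ) := by
  refine ⟨fun i j => ?_, by norm_num, by norm_num⟩
  rw [Matrix.one_apply]; split <;> norm_num

lemma dcols_one : dcols (1 : Matrix (Fin 2) (Fin 2) ℝ) = 1 := by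
  simp [dcols]

lemma comb_pos {u v x y : ℝ} (hu : 0 < u) (hv : 0 < v) (hx : 0 ≤ x) (hy : 0 ≤ y)
    (hxy : 0 < x + y) : 0 < u * x + v * y := by
  rcases hx.lt_or_eq with h | h
  · have : 0 ≤ v * y := mul_nonneg hv.le hy
    nlinarith [mul_pos hu h]
  · have hy' : 0 < y := by linarith
    nlinarith [mul_pos hv hy', mul_nonneg hu.le hx]

lemma ratio_eq (A B : Matrix (Fin 2) (Fin 2) ℝ) (hA : ColAllowable A)
    (hB : ColAllowable B) (hdB : dcols B ≠ 0) :
    dcols (B*A) / dcols B =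
      |A.det| * ((B 0 0 + B 1 0) * (B 0 1 + B 1 1)) /
      ((((B 0 0 + B 1 0) * A 0 0 + (B 0 1 + B 1 1) * A 1 0)) *
       (((B 0 0 + B 1 0) * A 0 1 + (B 0 1 + B 1 1) * A 1 1))) := by
  obtain ⟨hBn, hu, hv⟩ := hB
  obtain ⟨hAn, hc1, hc2⟩ := hA
  have hs0 : (B*A) 0 0 + (B*A) 1 0 = (B 0 0 + B 1 0) * A 0 0 + (B 0 1 + B 1 1) * A 1 0 := by
    simp [Matrix.mul_apply, Fin.sum_univ_two]; ring
  have hs1 : (B*A) 0 1 + (B*A) 1 1 = (B 0 0 + B 1 0) * A 0 1 + (B 0 1 + B 1 1) * A 1 1 := by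
    simp [Matrix.mul_apply, Fin.sum_univ_two]; ring
  have hd1 : 0 < (B 0 0 + B 1 0) * A 0 0 + (B 0 1 + B 1 1) * A 1 0 :=
    comb_pos hu hv (hAn 0 0) (hAn 1 0) hc1
  have hd2 : 0 < (B 0 0 + B 1 0) * A 0 1 + (B 0 1 + B 1 1) * A 1 1 :=
    comb_pos hu hv (hAn 0 1) (hAn 1 1) hc2
  have hdetB : B.det ≠ 0 := by
    intro h; apply hdB; simp [dcols, h]
  rw [dcols, dcols, Matrix.det_mul, abs_mul, hs0, hs1]
  field_simp

set_option maxHeartbeats 800000 in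
lemma key_ineq (a b c d u v : ℝ) (ha : 0 ≤ a) (hb : 0 ≤ b) (hc : 0 ≤ c) (hd : 0 ≤ d)
    (hu : 0 < u) (hv : 0 < v) (h1 : 0 < u*a + v*c) (h2 : 0 < u*b + v*d)
    (hK : 0 < a*d + b*c) :
    |a*d - b*c| * (u*v) / ((u*a + v*c) * (u*b + v*d)) ≤
      |Real.sqrt (a*d) - Real.sqrt (b*c)| / (Real.sqrt (a*d) + Real.sqrt (b*c)) := by
  set sa := Real.sqrt (a*d) with hsa
  set sb := Real.sqrt (b*c) with hsb
  have hsa2 : sa^2 = a*d := Real.sq_sqrt (by positivity)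
  have hsb2 : sb^2 = b*c := Real.sq_sqrt (by positivity)
  have hsa0 : 0 ≤ sa := Real.sqrt_nonneg _
  have hsb0 : 0 ≤ sb := Real.sqrt_nonneg _
  have hs : 0 < sa + sb := by nlinarith [mul_nonneg hsa0 hsb0]
  rw [div_le_div_iff₀ (by positivity) hs]
  have hD : |a*d - b*c| = |sa - sb| * (sa + sb) := by
    rw [show a*d - b*c = (sa - sb) * (sa + sb) by nlinarith, abs_mul, abs_of_pos hs]
  rw [hD]
  have key : (sa + sb)^2 * (u*v) ≤ (u*a + v*c) * (u*b + v*d) := by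
    set p := Real.sqrt (a*b) with hp
    set q := Real.sqrt (c*d) with hq
    have hp2 : p^2 = a*b := Real.sq_sqrt (by positivity)
    have hq2 : q^2 = c*d := Real.sq_sqrt (by positivity)
    have hpq : p * q = sa * sb := by
      rw [hp, hq, hsa, hsb, ← Real.sqrt_mul (by positivity), ← Real.sqrt_mul (by positivity)]
      ring_nf
    have h3 : p*q*(u*v) = sa*sb*(u*v) := by rw [hpq]
    have h4 : p^2*u^2 = a*b*u^2 := by rw [hp2]
    have h5 : q^2*v^2 = c*d*v^2 := by rw [hq2]
    have h6 : sa^2*(u*v) = a*d*(u*v) := by rw [hsa2]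
    have h7 : sb^2*(u*v) = b*c*(u*v) := by rw [hsb2]
    nlinarith [sq_nonneg (p*u - q*v), h3, h4, h5, h6, h7]
  calc |sa - sb| * (sa + sb) * (u * v) * (sa + sb)
      = |sa - sb| * ((sa + sb)^2 * (u*v)) := by ring
    _ ≤ |sa - sb| * ((u*a + v*c) * (u*b + v*d)) :=
        mul_le_mul_of_nonneg_left key (abs_nonneg _)

set_option maxHeartbeats 1600000 in
lemma key_wit (a b c d w : ℝ) (ha : 0 ≤ a) (hb : 0 ≤ b) (hc : 0 ≤ c) (hd : 0 ≤ d)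
    (hc1 : 0 < a + c) (hc2 : 0 < b + d) (hK : 0 < a*d + b*c)
    (hw : w < |Real.sqrt (a*d) - Real.sqrt (b*c)| / (Real.sqrt (a*d) + Real.sqrt (b*c))) :
    ∃ t : ℝ, 0 < t ∧ w < |a*d - b*c| * t / ((t*a + c) * (t*b + d)) := by
  set sa := Real.sqrt (a*d) with hsa
  set sb := Real.sqrt (b*c) with hsb
  have hsa2 : sa^2 = a*d := Real.sq_sqrt (by positivity)
  have hsb2 : sb^2 = b*c := Real.sq_sqrt (by positivity)
  have hsa0 : 0 ≤ sa := Real.sqrt_nonneg _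
  have hsb0 : 0 ≤ sb := Real.sqrt_nonneg _
  have hs : 0 < sa + sb := by nlinarith [mul_nonneg hsa0 hsb0]
  have hden1 : ∀ t : ℝ, 0 < t → 0 < (t*a + c) * (t*b + d) := by
    intro t ht
    have e1 : 0 < t*a + c := by
      rcases ha.lt_or_eq with h|h
      · nlinarith
      · have hcc : 0 < c := by linarith
        nlinarith
    have e2 : 0 < t*b + d := by
      rcases hb.lt_or_eq with h|h
      · nlinarith
      · have hdd : 0 < d := by linarith
        nlinarith
    exact mul_pos e1 e2
  have hDabs : |a*d - b*c| = |sa - sb| * (sa + sb) := by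
    rw [show a*d - b*c = (sa - sb) * (sa + sb) by nlinarith, abs_mul, abs_of_pos hs]
  by_cases hD : |a*d - b*c| = 0
  · refine ⟨1, one_pos, ?_⟩
    have hL0 : |sa - sb| = 0 := by
      rcases mul_eq_zero.1 (hDabs ▸ hD) with h|h
      · exact h
      · exact absurd h hs.ne'
    have hwneg : w < 0 := by rw [hL0] at hw; simpa using hw
    rw [hD, zero_mul, zero_div]
    exact hwneg
  · have hD0 : 0 < |a*d - b*c| := (abs_nonneg _).lt_of_ne (Ne.symm hD)
    by_cases hw0 : w ≤ 0
    · refine ⟨1, one_pos, ?_⟩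
      have h1 := hden1 1 one_pos
      have hval : 0 < |a*d - b*c| * 1 / ((1*a + c) * (1*b + d)) := by positivity
      linarith
    · push_neg at hw0
      have hprod : sa * sb = Real.sqrt ((a*b)*(c*d)) := by
        rw [hsa, hsb, ← Real.sqrt_mul (by positivity)]
        ring_nf
      by_cases hab : a*b = 0
      · have hsab0 : sa * sb = 0 := by rw [hprod, hab, zero_mul, Real.sqrt_zero]
        have hLK : |sa-sb|/(sa+sb) = |a*d-b*c| / (a*d + b*c) := by
          rw [hDabs, div_eq_div_iff hs.ne' hK.ne']
          linear_combination (-|sa-sb|)*hsa2 + (-|sa-sb|)*hsb2 + (-2*|sa-sb|)*hsab0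
        rw [hLK] at hw
        have hDK : 0 < |a*d-b*c| - w * (a*d + b*c) := by
          rw [lt_div_iff₀ hK] at hw; linarith
        by_cases hcd : c*d = 0
        · refine ⟨1, one_pos, ?_⟩
          have h1 := hden1 1 one_pos
          rw [lt_div_iff₀ h1]
          nlinarith [hab, hcd]
        · have hcd0 : 0 < c*d := ((mul_nonneg hc hd).lt_of_ne (Ne.symm hcd))
          obtain ⟨t, ht0, ht⟩ : ∃ t : ℝ, 0 < t ∧
              t * (|a*d-b*c| - w*(a*d+b*c)) = 2*w*(c*d) :=
            ⟨2*w*(c*d)/(|a*d-b*c| - w*(a*d+b*c)), by positivity, div_mul_cancel₀ _ hDK.ne'⟩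
          refine ⟨t, ht0, ?_⟩
          have hab' : w*(a*b)*(t*t) = 0 := by rw [hab]; ring
          rw [lt_div_iff₀ (hden1 t ht0)]
          nlinarith [ht, hab', mul_pos hw0 hcd0]
      · have hab0 : 0 < a*b := ((mul_nonneg ha hb).lt_of_ne (Ne.symm hab))
        by_cases hcd : c*d = 0
        · have hsab0 : sa * sb = 0 := by rw [hprod, hcd, mul_zero, Real.sqrt_zero]
          have hLK : |sa-sb|/(sa+sb) = |a*d-b*c| / (a*d + b*c) := by
            rw [hDabs, div_eq_div_iff hs.ne' hK.ne']
            linear_combination (-|sa-sb|)*hsa2 + (-|sa-sb|)*hsb2 + (-2*|sa-sb|)*hsab0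
          rw [hLK] at hw
          have hDK : 0 < |a*d-b*c| - w * (a*d + b*c) := by
            rw [lt_div_iff₀ hK] at hw; linarith
          have h2abw : 0 < 2*(a*b)*w := mul_pos (by linarith) hw0
          obtain ⟨t, ht0, ht⟩ : ∃ t : ℝ, 0 < t ∧
              t * (2*(a*b)*w) = |a*d-b*c| - w*(a*d+b*c) :=
            ⟨(|a*d-b*c| - w*(a*d+b*c))/(2*(a*b)*w), div_pos hDK h2abw,
              div_mul_cancel₀ _ h2abw.ne'⟩
          refine ⟨t, ht0, ?_⟩
          have ht' : 2*w*(a*b)*(t*t) = (|a*d-b*c| - w*(a*d+b*c))*t := by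
            rw [← ht]; ring
          have hcd' : w*(c*d) = 0 := by rw [hcd]; ring
          rw [lt_div_iff₀ (hden1 t ht0)]
          nlinarith [ht', hcd', mul_pos ht0 hDK]
        · have hcd0 : 0 < c*d := ((mul_nonneg hc hd).lt_of_ne (Ne.symm hcd))
          set p := Real.sqrt (a*b) with hp
          set q := Real.sqrt (c*d) with hq
          have hp0 : 0 < p := Real.sqrt_pos.2 hab0
          have hq0 : 0 < q := Real.sqrt_pos.2 hcd0
          have hp2 : p^2 = a*b := Real.sq_sqrt (by positivity)
          have hq2 : q^2 = c*d := Real.sq_sqrt (by positivity)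
          have hpq : sa * sb = p * q := by
            rw [hprod, hp, hq, ← Real.sqrt_mul (by positivity)]
          obtain ⟨t, ht0, ht⟩ : ∃ t : ℝ, 0 < t ∧ t * p = q :=
            ⟨q/p, by positivity, div_mul_cancel₀ q hp0.ne'⟩
          refine ⟨t, ht0, ?_⟩
          have h2 : (t*p)^2 = q^2 := by rw [ht]
          have h1 : t^2*(a*b) = c*d := by linear_combination h2 + (-(t^2))*hp2 + hq2
          have h3 : t*(sa*sb) = c*d := by linear_combination t*hpq + q*ht + hq2
          have hfac : (t*a+c)*(t*b+d) = (sa+sb)^2*t := by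
            linear_combination h1 + (-t)*hsa2 + (-t)*hsb2 + (-2)*h3
          have heq : |a*d-b*c| * t/((t*a+c)*(t*b+d)) = |sa-sb|/(sa+sb) := by
            rw [hDabs, hfac, div_eq_div_iff (by positivity) hs.ne']
            ring
          rw [heq]
          exact hw

set_option maxHeartbeats 1600000 in
theorem stmt0 (A : Matrix (Fin 2) (Fin 2) ℝ) (hA : ColAllowable A) :
    (0 < A 0 0 + A 0 1 ∧ 0 < A 1 0 + A 1 1 →
      tau A = |Real.sqrt (A 0 0 * A 1 1) - Real.sqrt (A 0 1 * A 1 0)| /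
        (Real.sqrt (A 0 0 * A 1 1) + Real.sqrt (A 0 1 * A 1 0))) ∧
    (¬(0 < A 0 0 + A 0 1 ∧ 0 < A 1 0 + A 1 1) →
      tau A = 0 ∧ ∀ B, ColAllowable B → dcols B ≠ 0 → dcols (B * A) = 0) := by
  have ha := hA.1 0 0
  have hb := hA.1 0 1
  have hc := hA.1 1 0
  have hd := hA.1 1 1
  have hcol1 := hA.2.1
  have hcol2 := hA.2.2
  have hdet : A.det = A 0 0 * A 1 1 - A 0 1 * A 1 0 := Matrix.det_fin_two A
  constructor
  · rintro ⟨hr1, hr2⟩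
    have hK : 0 < A 0 0 * A 1 1 + A 0 1 * A 1 0 := by
      rcases ha.lt_or_eq with h | h
      · rcases hd.lt_or_eq with h2 | h2
        · nlinarith [mul_nonneg hb hc]
        · have hc' : 0 < A 1 0 := by linarith
          have hb' : 0 < A 0 1 := by linarith
          nlinarith [mul_pos hb' hc']
      · have hc' : 0 < A 1 0 := by linarith
        have hb' : 0 < A 0 1 := by linarith
        nlinarith [mul_pos hb' hc', mul_nonneg ha hd]
    have hub : ∀ x ∈ ((fun B => dcols (B * A) / dcols B) ''
        {B | ColAllowable B ∧ dcols B ≠ 0}), x ≤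
        |Real.sqrt (A 0 0 * A 1 1) - Real.sqrt (A 0 1 * A 1 0)| /
        (Real.sqrt (A 0 0 * A 1 1) + Real.sqrt (A 0 1 * A 1 0)) := by
      rintro x ⟨B, ⟨hB, hdB⟩, rfl⟩
      show dcols (B * A) / dcols B ≤ _
      rw [ratio_eq A B hA hB hdB, hdet]
      exact key_ineq (A 0 0) (A 0 1) (A 1 0) (A 1 1) (B 0 0 + B 1 0) (B 0 1 + B 1 1)
        ha hb hc hd hB.2.1 hB.2.2
        (comb_pos hB.2.1 hB.2.2 ha hc hcol1)
        (comb_pos hB.2.1 hB.2.2 hb hd hcol2) hK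
    apply le_antisymm
    · exact Real.sSup_le hub (div_nonneg (abs_nonneg _) (by positivity))
    · refine le_of_forall_lt fun w hw => ?_
      obtain ⟨t, ht0, hval⟩ := key_wit (A 0 0) (A 0 1) (A 1 0) (A 1 1) w
        ha hb hc hd hcol1 hcol2 hK hw
      set Bt : Matrix (Fin 2) (Fin 2) ℝ := Matrix.of ![![t, 0], ![0, 1]] with hBtdef
      have hBt00 : Bt 0 0 = t := rfl
      have hBt01 : Bt 0 1 = 0 := rfl
      have hBt10 : Bt 1 0 = 0 := rfl
      have hBt11 : Bt 1 1 = 1 := rfl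
      have hBt : ColAllowable Bt := by
        refine ⟨fun i j => ?_, by rw [hBt00, hBt10]; linarith, by rw [hBt01, hBt11]; linarith⟩
        fin_cases i <;> fin_cases j <;> simp [hBtdef] <;> exact ht0.le
      have hdBt : dcols Bt = 1 := by
        rw [dcols, Matrix.det_fin_two, hBt00, hBt01, hBt10, hBt11]
        rw [abs_of_pos (by linarith : (0:ℝ) < t * 1 - 0 * 0)]
        field_simp
        ring
      have hdBt' : dcols Bt ≠ 0 := by rw [hdBt]; norm_num
      have hmem : dcols (Bt * A) / dcols Bt ∈ ((fun B => dcols (B * A) / dcols B) ''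
          {B | ColAllowable B ∧ dcols B ≠ 0}) := ⟨Bt, ⟨hBt, hdBt'⟩, rfl⟩
      have hlt : w < dcols (Bt * A) / dcols Bt := by
        rw [ratio_eq A Bt hA hBt hdBt', hdet, hBt00, hBt01, hBt10, hBt11]
        convert hval using 3 <;> ring
      exact lt_csSup_of_lt ⟨_, hub⟩ hmem hlt
  · intro h
    have hdet0 : A.det = 0 := by
      rw [hdet]
      by_cases h1 : 0 < A 0 0 + A 0 1
      · have h2 : A 1 0 + A 1 1 ≤ 0 := by
          by_contra h3; push_neg at h3
          exact h ⟨h1, h3⟩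
        have e1 : A 1 0 = 0 := le_antisymm (by linarith) hc
        have e2 : A 1 1 = 0 := le_antisymm (by linarith) hd
        rw [e1, e2]; ring
      · push_neg at h1
        have e1 : A 0 0 = 0 := le_antisymm (by linarith) ha
        have e2 : A 0 1 = 0 := le_antisymm (by linarith) hb
        rw [e1, e2]; ring
    have hzero : ∀ B, ColAllowable B → dcols B ≠ 0 → dcols (B * A) = 0 := by
      intro B _ _
      rw [dcols, Matrix.det_mul, hdet0, mul_zero, abs_zero, zero_div]
    refine ⟨?_, hzero⟩
    have hall : ∀ x ∈ ((fun B => dcols (B * A) / dcols B) ''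
        {B | ColAllowable B ∧ dcols B ≠ 0}), x = 0 := by
      rintro x ⟨B, ⟨hB, hdB⟩, rfl⟩
      show dcols (B * A) / dcols B = 0
      rw [hzero B hB hdB, zero_div]
    apply le_antisymm
    · exact Real.sSup_le (fun x hx => le_of_eq (hall x hx)) le_rfl
    · have hmem : (0:ℝ) ∈ ((fun B => dcols (B * A) / dcols B) ''
          {B | ColAllowable B ∧ dcols B ≠ 0}) := by
        refine ⟨1, ⟨colAllowable_one, by rw [dcols_one]; norm_num⟩, ?_⟩
        show dcols ((1 : Matrix (Fin 2) (Fin 2) ℝ) * A) / dcols 1 = 0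
        rw [hzero 1 colAllowable_one (by rw [dcols_one]; norm_num), zero_div]
      exact le_csSup ⟨0, fun x hx => le_of_eq (hall x hx)⟩ hmem
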